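/- Let X = (m_1,...,m_n) be a sequence of nonnegative integers with m = m_1 + ... + m_n. Then (1/2)·H(X)·m ≤ OPT-ST(X) ≤ 2·(H(X)+1)·m. -/

import Mathlib

/-- A rooted tree (or the empty tree) on a subset `supp` of the vertex type `V`,
represented by parent pointers. -/
structure RTree (V : Type) where
  supp : Finset V
  parent : V → Option V
  parent_eq_none : ∀ v ∉ supp, parent v = none
  mem_of_parent : ∀ {v w : V}, parent v = some w → v ∈ supp ∧ w ∈ supp
  root_unique : ∀ v ∈ supp, ∀ w ∈ supp, parent v = none → parent w = none → v = w
  reaches_root : ∀ v ∈ supp, ∃ r ∈ supp, parent r = none ∧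
    Relation.ReflTransGen (fun a b => parent a = some b) v r

namespace RTree

variable {V : Type}

/-- `T.Anc a v` : `a` is an ancestor of `v` in `T` (possibly `a = v`). -/
def Anc (T : RTree V) (a v : V) : Prop :=
  Relation.ReflTransGen (fun x y => T.parent x = some y) v a

/-- `a` is a strict ancestor of `v`. -/
def StrictAnc (T : RTree V) (a v : V) : Prop := a ≠ v ∧ T.Anc a v

/-- The set of vertices of the subtree rooted at `a` (the descendants of `a`). -/
def descSet (T : RTree V) (a : V) : Set V := {v | T.Anc a v}

/-- The depth of a node: the number of nodes on the path from the root to it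
(the root has depth 1). -/
noncomputable def depth (T : RTree V) (v : V) : ℕ := Set.ncard {a | T.Anc a v}

def IsRoot (T : RTree V) (r : V) : Prop := r ∈ T.supp ∧ T.parent r = none

end RTree

/-- The restriction of a graph to a set of vertices (keeping the ambient vertex type). -/
def restrictG {V : Type} (G : SimpleGraph V) (U : Set V) : SimpleGraph V where
  Adj a b := G.Adj a b ∧ a ∈ U ∧ b ∈ U
  symm := ⟨fun a b ⟨h, ha, hb⟩ => ⟨h.symm, hb, ha⟩⟩
  loopless := ⟨fun a ⟨h, _, _⟩ => G.ne_of_adj h rfl⟩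

/-- `T` is a search tree on the induced subgraph `G[U]`: its nodes are the vertices of `U`,
the subtree of every node induces a connected subgraph, and every edge of `G[U]` joins
two comparable nodes of `T`. -/
def IsSTGOn {V : Type} (G : SimpleGraph V) (U : Finset V) (T : RTree V) : Prop :=
  T.supp = U ∧
  (∀ v ∈ U, ((restrictG G ↑U).induce (T.descSet v)).Connected) ∧
  (∀ u v : V, u ∈ U → v ∈ U → G.Adj u v → T.Anc u v ∨ T.Anc v u)

/-- `T` is a search tree on the graph `G`. -/
def IsSTG {V : Type} [Fintype V] (G : SimpleGraph V) (T : RTree V) : Prop :=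
  IsSTGOn G Finset.univ T

/-- `T'` is obtained from `T` by rotating the edge `(p, c)` of `T`, where `p` is
the parent of `c`: `c` replaces `p` (becoming a child of `p`'s former parent, or the
root if `p` was the root), `p` becomes a child of `c`, `p` keeps its other children,
and each child `x` of `c` whose subtree contains a vertex of `G` adjacent to `p`
becomes a child of `p` (the other children of `c` stay children of `c`). -/
def IsRotationAt {V : Type} (G : SimpleGraph V) (T T' : RTree V) (p c : V) : Prop :=
  T.parent c = some p ∧
  T'.supp = T.supp ∧
  T'.parent c = T.parent p ∧
  T'.parent p = some c ∧
  (∀ x : V, x ≠ p → T.parent x = some c →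
    ((∃ u ∈ T.descSet x, G.Adj u p) → T'.parent x = some p) ∧
    (¬(∃ u ∈ T.descSet x, G.Adj u p) → T'.parent x = some c)) ∧
  (∀ x : V, x ≠ c → x ≠ p → T.parent x ≠ some c → T'.parent x = T.parent x)

/-- `T'` is obtained from `T` by a single rotation. -/
def IsRotation {V : Type} (G : SimpleGraph V) (T T' : RTree V) : Prop :=
  ∃ p c, IsRotationAt G T T' p c

/-- `T2` can be obtained from `T1` by exactly `k` rotations. -/
def ReachesIn {V : Type} (G : SimpleGraph V) : ℕ → RTree V → RTree V → Prop
  | 0, T1, T2 => T1 = T2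
  | k+1, T1, T2 => ∃ T', IsRotation G T1 T' ∧ ReachesIn G k T' T2

/-- Vertex type of the caterpillar `C(m_1, …, m_n)`: spine vertices `inl i` and
leg vertices `inr ⟨i, j⟩`. -/
abbrev CatV (n : ℕ) (m : Fin n → ℕ) : Type := Fin n ⊕ (Σ i : Fin n, Fin (m i))

/-- The caterpillar tree `C(m_1, …, m_n)`: the spine `s_1 - s_2 - ⋯ - s_n` is a path,
and leg `ℓ_{i,j}` is adjacent to `s_i`. -/
def caterpillar (n : ℕ) (m : Fin n → ℕ) : SimpleGraph (CatV n m) where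
  Adj x y :=
    match x, y with
    | Sum.inl i, Sum.inl j => i.val + 1 = j.val ∨ j.val + 1 = i.val
    | Sum.inl i, Sum.inr l => l.1 = i
    | Sum.inr l, Sum.inl i => l.1 = i
    | Sum.inr _, Sum.inr _ => False
  symm := ⟨by rintro (i | l) (j | l') h <;> simp_all <;> tauto⟩
  loopless := ⟨by rintro (i | l) h <;> simp_all⟩

/-- The (base 2) Shannon entropy `H(m_1, …, m_n) = ∑_{i : m_i > 0} (m_i/m) log (m/m_i)`. -/
noncomputable def shannonH {n : ℕ} (m : Fin n → ℕ) : ℝ :=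
  ∑ i, if 0 < m i then
    ((m i : ℝ) / (∑ j, (m j : ℝ))) * Real.logb 2 ((∑ j, (m j : ℝ)) / (m i : ℝ))
  else 0

/-- The parent function of the search tree `A(S, π)` on the caterpillar: the legs form a
path at the top of the tree, ordered bottom-to-top according to `π`, and the spine nodes
hang below, arranged according to the BST `S`. -/
def AParent {n : ℕ} {m : Fin n → ℕ} (S : RTree (Fin n))
    (π : Fin (∑ i, m i) ≃ (Σ i : Fin n, Fin (m i))) :
    CatV n m → Option (CatV n m) :=
  fun x => match x with
  | Sum.inl i =>
      match S.parent i with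
      | some j => some (Sum.inl j)
      | none => if h : 0 < ∑ i, m i then some (Sum.inr (π ⟨0, h⟩)) else none
  | Sum.inr l =>
      if h : (π.symm l).val + 1 < ∑ i, m i then
        some (Sum.inr (π ⟨(π.symm l).val + 1, h⟩))
      else none

/-- `T = A(S, π)`. -/
def IsA {n : ℕ} {m : Fin n → ℕ} (S : RTree (Fin n))
    (π : Fin (∑ i, m i) ≃ (Σ i : Fin n, Fin (m i))) (T : RTree (CatV n m)) : Prop :=
  T.supp = Finset.univ ∧ T.parent = AParent S π

/-- The parent function of the search tree `B(S)` on the caterpillar: every leg `ℓ_{i,j}`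
is a (childless) child of `s_i`, and the spine nodes are arranged according to `S`. -/
def BParent {n : ℕ} {m : Fin n → ℕ} (S : RTree (Fin n)) :
    CatV n m → Option (CatV n m) :=
  fun x => match x with
  | Sum.inl i => (S.parent i).map Sum.inl
  | Sum.inr l => some (Sum.inl l.1)

/-- `T = B(S)`. -/
def IsB {n : ℕ} {m : Fin n → ℕ} (S : RTree (Fin n)) (T : RTree (CatV n m)) : Prop :=
  T.supp = Finset.univ ∧ T.parent = BParent S

/-- `σ(π)`: the sequence of spine indices obtained from the leg ordering `π` by replacing
each leg `ℓ_{i,j}` with `i`. -/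
def sigmaOf {n : ℕ} {m : Fin n → ℕ}
    (π : Fin (∑ i, m i) ≃ (Σ i : Fin n, Fin (m i))) : List (Fin n) :=
  List.ofFn (fun j => (π j).1)

/-- Every leg node of `T` is bound, i.e. no leg node has a child. -/
def noFreeLegs {n : ℕ} {m : Fin n → ℕ} (T : RTree (CatV n m)) : Prop :=
  ∀ (x : CatV n m) (l : Σ i : Fin n, Fin (m i)), T.parent x ≠ some (Sum.inr l)

open Classical in
/-- The number of adjacent pairs in a list satisfying `P`. -/
noncomputable def pairAlt {α : Type} (P : α → α → Prop) : List α → ℕ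
  | [] => 0
  | [_] => 0
  | a :: b :: t => (if P a b then 1 else 0) + pairAlt P (b :: t)

open Classical in
/-- Wilber's quantity `λ(S, u, σ)`: 0 if `u` has at most one child; otherwise the number
of adjacent pairs in the restriction of `σ` to the subtree of `u` that do not both lie in
the subtree of one child of `u` and are not both equal to `u`. -/
noncomputable def wilberLam {n : ℕ} (S : RTree (Fin n)) (u : Fin n) (σ : List (Fin n)) : ℕ :=
  if (∃ v w : Fin n, v ≠ w ∧ S.parent v = some u ∧ S.parent w = some u) then
    pairAlt (fun x y =>
      ¬((x = u ∧ y = u) ∨ ∃ ch, S.parent ch = some u ∧ S.Anc ch x ∧ S.Anc ch y))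
      (σ.filter (fun x => decide (S.Anc u x)))
  else 0

/-- `λ'(S, u, σ) = λ(S, u, σ)` plus the number of occurrences of `u` in `σ`. -/
noncomputable def wilberLam' {n : ℕ} (S : RTree (Fin n)) (u : Fin n)
    (σ : List (Fin n)) : ℕ :=
  wilberLam S u σ + σ.count u

/-- Wilber's first lower bound `Λ'(S, σ) = ∑_u λ'(S, u, σ)`. -/
noncomputable def wilberL' {n : ℕ} (S : RTree (Fin n)) (σ : List (Fin n)) : ℕ :=
  ∑ u : Fin n, wilberLam' S u σ

/-- `P` is the projection `T[U]` of `T` onto `U`: its nodes are the nodes of `T` in `U`,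
and the parent of `u` in `P` is the nearest strict ancestor of `u` in `T` that lies
in `U` (which is exactly the result of pruning the vertices outside `U` one by one). -/
def IsProjOn {V : Type} [DecidableEq V] (T : RTree V) (U : Finset V) (P : RTree V) : Prop :=
  P.supp = T.supp ∩ U ∧
  ∀ u w : V, P.parent u = some w ↔
    (u ∈ U ∧ w ∈ U ∧ T.StrictAnc w u ∧ ∀ z ∈ U, T.StrictAnc z u → T.Anc z w)

/-- `P` is obtained from `T` by pruning the vertex `v`. -/
def IsPruneOf {V : Type} [DecidableEq V] (T : RTree V) (v : V) (P : RTree V) : Prop :=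
  IsProjOn T (T.supp.erase v) P

/-- `PruneSeq T l P`: `P` is obtained from `T` by successively pruning the
vertices in the list `l`, in order. -/
def PruneSeq {V : Type} [DecidableEq V] : RTree V → List V → RTree V → Prop
  | T, [], P => P = T
  | T, v :: rest, P => ∃ P', IsPruneOf T v P' ∧ PruneSeq P' rest P

/-- The number of alternations (edges whose endpoints get different colors under `f`)
on the path from the root to `z`. -/
noncomputable def altAt {V K : Type} (f : V → K) (T : RTree V) (z : V) : ℕ :=
  Set.ncard {x | T.Anc x z ∧ ∃ y, T.parent x = some y ∧ f x ≠ f y}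

/-- The alternation number of `T` w.r.t. the coloring `f`: the maximum number of
alternations on a root-to-node path. -/
noncomputable def altNum {V K : Type} (f : V → K) (T : RTree V) : ℕ :=
  T.supp.sup (fun z => altAt f T z)

/-! ### Generic RTree lemmas -/

namespace RTreeAux

variable {V : Type} (T : RTree V)

/-- The parent step relation. -/
def rel (T : RTree V) (a b : V) : Prop := T.parent a = some b

lemma rel_functional {a b c : V} (h1 : rel T a b) (h2 : rel T a c) : b = c := by
  unfold rel at h1 h2; rw [h1] at h2; exact Option.some.inj h2

lemma anc_iff {a v : V} : T.Anc a v ↔ Relation.ReflTransGen (rel T) v a := Iff.rfl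

/-- Determinism: two reachable points are comparable. -/
lemma reach_det {a b c : V} (hb : Relation.ReflTransGen (rel T) a b)
    (hc : Relation.ReflTransGen (rel T) a c) :
    Relation.ReflTransGen (rel T) b c ∨ Relation.ReflTransGen (rel T) c b := by
  induction hb using Relation.ReflTransGen.head_induction_on generalizing c with
  | refl => exact Or.inl hc
  | head h' hcb ih =>
    rcases hc.cases_head with rfl | ⟨c', h'', hc'⟩
    · exact Or.inr (Relation.ReflTransGen.head h' hcb)
    · exact ih (rel_functional T h' h'' ▸ hc')

/-- Everything reachable from a point on a cycle returns to the cycle point. -/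
lemma cycle_return {a a₁ : V} (h : rel T a a₁) (hc : Relation.ReflTransGen (rel T) a₁ a) :
    ∀ x, Relation.ReflTransGen (rel T) a x → Relation.ReflTransGen (rel T) x a := by
  intro x hx
  induction hx with
  | refl => exact .refl
  | tail hay hyx ih =>
    rcases ih.cases_head with rfl | ⟨y', h'', hy'⟩
    · exact (rel_functional T hyx h ▸ hc)
    · exact (rel_functional T hyx h'' ▸ hy')

/-- No cycles. -/
lemma no_cycle {a a₁ : V} (h : rel T a a₁) (hc : Relation.ReflTransGen (rel T) a₁ a) : False := by
  have ha : a ∈ T.supp := (T.mem_of_parent h).1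
  obtain ⟨r, _, hrnone, hreach⟩ := T.reaches_root a ha
  have hra : Relation.ReflTransGen (rel T) r a := cycle_return T h hc r hreach
  rcases hra.cases_head with rfl | ⟨z, hz, _⟩
  · rw [rel, hrnone] at h; simp at h
  · rw [rel, hrnone] at hz; simp at hz

lemma anc_antisymm {a b : V} (h1 : T.Anc a b) (h2 : T.Anc b a) : a = b := by
  rw [anc_iff] at h1 h2
  by_contra hne
  rcases h1.cases_head with rfl | ⟨c, hc, hcb⟩
  · exact hne rfl
  · exact no_cycle T hc (hcb.trans h2)

lemma anc_refl (v : V) : T.Anc v v := Relation.ReflTransGen.refl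

lemma anc_trans {a b c : V} (h1 : T.Anc a b) (h2 : T.Anc b c) : T.Anc a c := by
  rw [anc_iff] at *; exact h2.trans h1

/-- Two ancestors of the same node are comparable. -/
lemma anc_comparable {a b v : V} (h1 : T.Anc a v) (h2 : T.Anc b v) :
    T.Anc a b ∨ T.Anc b a := by
  rw [anc_iff] at h1 h2
  rcases reach_det T h1 h2 with h | h
  · exact Or.inr h
  · exact Or.inl h

lemma ancSet_eq_insert [Fintype V] {v w : V} (h : T.parent v = some w) :
    {a | T.Anc a v} = insert v {a | T.Anc a w} := by
  ext a
  simp only [Set.mem_setOf_eq, Set.mem_insert_iff]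
  constructor
  · intro hav
    rcases (anc_iff T).1 hav |>.cases_head with rfl | ⟨c, hc, hca⟩
    · exact Or.inl rfl
    · exact Or.inr ((anc_iff T).2 (rel_functional T hc h ▸ hca))
  · rintro (rfl | haw)
    · exact anc_refl T a
    · exact (anc_iff T).2 (Relation.ReflTransGen.head h ((anc_iff T).1 haw))

lemma not_anc_of_parent {v w : V} (h : T.parent v = some w) : ¬ T.Anc v w := by
  intro hvw
  exact no_cycle T (a := v) (a₁ := w) h ((anc_iff T).1 hvw)

lemma depth_parent [Fintype V] {v w : V} (h : T.parent v = some w) :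
    T.depth v = T.depth w + 1 := by
  unfold RTree.depth
  classical
  rw [ancSet_eq_insert T h]
  exact Set.ncard_insert_of_notMem (fun hv => not_anc_of_parent T h hv) (Set.toFinite _)

lemma depth_root [Fintype V] {v : V} (h : T.parent v = none) : T.depth v = 1 := by
  unfold RTree.depth
  have : {a | T.Anc a v} = {v} := by
    ext a
    simp only [Set.mem_setOf_eq, Set.mem_singleton_iff]
    constructor
    · intro hav
      rcases (anc_iff T).1 hav |>.cases_head with rfl | ⟨c, hc, _⟩
      · rfl
      · rw [rel, h] at hc; simp at hc
    · rintro rfl; exact anc_refl T a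
  rw [this, Set.ncard_singleton]

lemma one_le_depth [Fintype V] (v : V) : 1 ≤ T.depth v := by
  unfold RTree.depth
  have : ({v} : Set V) ⊆ {a | T.Anc a v} := by
    rintro a rfl; exact anc_refl T a
  calc 1 = ({v} : Set V).ncard := (Set.ncard_singleton v).symm
  _ ≤ _ := Set.ncard_le_ncard this (Set.toFinite _)

lemma depth_le_card [Fintype V] (v : V) : T.depth v ≤ Fintype.card V := by
  unfold RTree.depth
  calc Set.ncard {a | T.Anc a v} ≤ (Set.univ : Set V).ncard :=
        Set.ncard_le_ncard (Set.subset_univ _) (Set.toFinite _)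
  _ = Fintype.card V := by rw [Set.ncard_univ, Nat.card_eq_fintype_card]

lemma anc_ne_of_parent {v w : V} (h : T.parent v = some w) : v ≠ w := by
  rintro rfl
  exact no_cycle T h Relation.ReflTransGen.refl

lemma parent_none_of_depth_one [Fintype V] {v : V} (h : T.depth v = 1) : T.parent v = none := by
  rcases hp : T.parent v with _ | w
  · rfl
  · have := depth_parent T hp
    have := one_le_depth T w
    omega

lemma anc_mem_descSet {a v : V} : v ∈ T.descSet a ↔ T.Anc a v := Iff.rfl

lemma descSet_mono {a b : V} (h : T.Anc a b) : T.descSet b ⊆ T.descSet a := by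
  intro x hx
  exact anc_trans T h hx

end RTreeAux
/-! ### Lower bound: structure of search trees on the path graph -/

namespace LowerAux

open RTreeAux

variable {n : ℕ}

/-- Intermediate value along a walk whose steps change `f` by exactly 1. -/
lemma walk_intermediate {α : Type} {H : SimpleGraph α} (f : α → ℕ)
    (hadj : ∀ x y, H.Adj x y → f x + 1 = f y ∨ f y + 1 = f x) :
    ∀ {u v : α} (w : H.Walk u v) (c : ℕ), f u ≤ c → c ≤ f v →
      ∃ z ∈ w.support, f z = c := by
  intro u v w
  induction w with
  | @nil a => intro c h1 h2; exact ⟨a, by simp, by omega⟩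
  | @cons a b v hab w ih =>
    intro c h1 h2
    by_cases hb : f b ≤ c
    · obtain ⟨z, hz, hfz⟩ := ih c hb h2
      exact ⟨z, by simp [hz], hfz⟩
    · push_neg at hb
      rcases hadj a b hab with h | h
      · exact ⟨a, by simp, by omega⟩
      · omega

variable (S : RTree (Fin n))

lemma adj_of_induced {U : Set (Fin n)} {x y : ↥U}
    (h : (((restrictG (SimpleGraph.pathGraph n) ↑(Finset.univ : Finset (Fin n))).induce U)).Adj x y) :
    (x : Fin n).val + 1 = (y : Fin n).val ∨ (y : Fin n).val + 1 = (x : Fin n).val := by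
  obtain ⟨hadj, -, -⟩ : (SimpleGraph.pathGraph n).Adj (x : Fin n) (y : Fin n) ∧ (x : Fin n) ∈ (↑(Finset.univ : Finset (Fin n)) : Set (Fin n)) ∧ (y : Fin n) ∈ (↑(Finset.univ : Finset (Fin n)) : Set (Fin n)) := h
  exact (SimpleGraph.pathGraph_adj).1 hadj

lemma descSet_connected (hS : IsSTG (SimpleGraph.pathGraph n) S) (v : Fin n) :
    ((restrictG (SimpleGraph.pathGraph n) ↑(Finset.univ : Finset (Fin n))).induce
      (S.descSet v)).Connected :=
  hS.2.1 v (Finset.mem_univ v)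

variable (hS : IsSTG (SimpleGraph.pathGraph n) S)
include hS

/-- descSet is an interval. -/
lemma descSet_interval {v : Fin n} {a b x : Fin n} (ha : a ∈ S.descSet v)
    (hb : b ∈ S.descSet v) (hax : a.val ≤ x.val) (hxb : x.val ≤ b.val) :
    x ∈ S.descSet v := by
  have hconn := descSet_connected S hS v
  obtain ⟨w⟩ := hconn.preconnected ⟨a, ha⟩ ⟨b, hb⟩
  obtain ⟨z, _, hfz⟩ := walk_intermediate (fun z : ↥(S.descSet v) => (z : Fin n).val)
    (fun x y h => adj_of_induced h) w x.val hax hxb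
  have : (z : Fin n) = x := Fin.ext hfz
  exact this ▸ z.2

lemma edge_comparable {u v : Fin n} (h : u.val + 1 = v.val) : S.Anc u v ∨ S.Anc v u :=
  hS.2.2 u v (Finset.mem_univ u) (Finset.mem_univ v)
    ((SimpleGraph.pathGraph_adj).2 (Or.inl h))

/-- A child subtree lies entirely on one side of the parent. -/
lemma child_side {v c x : Fin n} (hc : S.parent c = some v) (hcv : c.val < v.val)
    (hx : x ∈ S.descSet c) : x.val < v.val := by
  rcases lt_or_ge x.val v.val with h | h
  · exact h
  · exfalso
    apply not_anc_of_parent S hc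
    rcases eq_or_lt_of_le h with h' | h'
    · exact (Fin.ext h' : v = x) ▸ hx
    · exact descSet_interval S hS (anc_refl S c) hx (le_of_lt hcv) (le_of_lt h')

omit hS in
lemma desc_disjoint {v c c' : Fin n} (hc : S.parent c = some v) (hc' : S.parent c' = some v)
    (hne : c ≠ c') {x : Fin n} (h1 : x ∈ S.descSet c) (h2 : x ∈ S.descSet c') : False := by
  rcases anc_comparable S h1 h2 with h | h
  · rcases ((anc_iff S).1 h).cases_head with rfl | ⟨z, hz, hrest⟩
    · exact hne rfl
    · have : v = z := by rw [rel, hc'] at hz; exact Option.some.inj hz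
      exact no_cycle S (a := c) (a₁ := v) hc (this ▸ hrest)
  · rcases ((anc_iff S).1 h).cases_head with rfl | ⟨z, hz, hrest⟩
    · exact hne rfl
    · have : v = z := by rw [rel, hc] at hz; exact Option.some.inj hz
      exact no_cycle S (a := c') (a₁ := v) hc' (this ▸ hrest)

/-- Auxiliary: the asymmetric main case. -/
lemma one_child_aux {v c c' : Fin n} (hc : S.parent c = some v) (hc' : S.parent c' = some v)
    (hcv : c.val < v.val) (hc'v : c'.val < v.val) (hne : c ≠ c')
    {y w : Fin n}
    (hyD : y ∈ S.descSet c) (hymax : ∀ x ∈ S.descSet c, x.val ≤ y.val)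
    (hwD' : w ∈ S.descSet c') (hwmin : ∀ x ∈ S.descSet c', w.val ≤ x.val)
    (hyw : y.val < w.val) : False := by
  have hwlt : w.val < v.val := child_side S hS hc' hc'v hwD'
  have hzlt : y.val + 1 < n := lt_of_le_of_lt hyw w.isLt
  set z : Fin n := ⟨y.val + 1, hzlt⟩ with hz
  have hzD : z ∉ S.descSet c := fun hmem => by
    have := hymax z hmem; simp [hz] at this
  have hzdescv : z ∈ S.descSet v := by
    have hyv : y ∈ S.descSet v :=
      anc_trans S ((anc_iff S).2 (Relation.ReflTransGen.single hc)) hyD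
    have hwv : w ∈ S.descSet v :=
      anc_trans S ((anc_iff S).2 (Relation.ReflTransGen.single hc')) hwD'
    exact descSet_interval S hS hyv hwv (by simp [hz]) (by simp [hz]; omega)
  rcases edge_comparable S hS (show y.val + 1 = z.val from rfl) with h | h
  · exact hzD (anc_trans S hyD h)
  · have hcy : S.Anc c y := hyD
    rcases anc_comparable S h hcy with h1 | h1
    · rcases ((anc_iff S).1 h1).cases_head with rfl | ⟨t, ht, hrest⟩
      · exact hzD (anc_refl S z)
      · have htv : v = t := by rw [rel, hc] at ht; exact Option.some.inj ht
        have hzv : S.Anc z v := (anc_iff S).2 (htv ▸ hrest)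
        have : z = v := anc_antisymm S hzv hzdescv
        rw [Fin.ext_iff] at this
        simp [hz] at this
        omega
    · exact hzD h1

/-- At most one child of `v` on the small side. -/
lemma one_child_small {v c c' : Fin n} (hc : S.parent c = some v) (hc' : S.parent c' = some v)
    (hcv : c.val < v.val) (hc'v : c'.val < v.val) : c = c' := by
  classical
  by_contra hne
  set D : Finset (Fin n) := Finset.univ.filter (fun x => x ∈ S.descSet c) with hD
  set D' : Finset (Fin n) := Finset.univ.filter (fun x => x ∈ S.descSet c') with hD'
  have hDne : D.Nonempty := ⟨c, by simp [hD]; exact anc_refl S c⟩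
  have hD'ne : D'.Nonempty := ⟨c', by simp [hD']; exact anc_refl S c'⟩
  rcases lt_trichotomy (D.max' hDne).val (D'.max' hD'ne).val with hlt | heq | hgt
  · -- max D < max D' : min of D' exceeds max D
    refine one_child_aux S hS hc hc' hcv hc'v hne
      (show D.max' hDne ∈ S.descSet c by have := Finset.max'_mem D hDne; simpa [hD] using this)
      (fun x hx => Finset.le_max' D x (by simp [hD]; exact hx))
      (show D'.min' hD'ne ∈ S.descSet c' by have := Finset.min'_mem D' hD'ne; simpa [hD'] using this)
      (fun x hx => Finset.min'_le D' x (by simp [hD']; exact hx)) ?_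
    -- show max D < min D'
    by_contra hle
    push_neg at hle
    have hyD' : D.max' hDne ∈ S.descSet c' := by
      refine descSet_interval S hS
        (show D'.min' hD'ne ∈ S.descSet c' by have := Finset.min'_mem D' hD'ne; simpa [hD'] using this)
        (show D'.max' hD'ne ∈ S.descSet c' by have := Finset.max'_mem D' hD'ne; simpa [hD'] using this)
        hle (le_of_lt hlt)
    exact desc_disjoint S hc hc' hne
      (show D.max' hDne ∈ S.descSet c by have := Finset.max'_mem D hDne; simpa [hD] using this) hyD'
  · exact desc_disjoint S hc hc' hne
      (show D.max' hDne ∈ S.descSet c by have := Finset.max'_mem D hDne; simpa [hD] using this)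
      (show D.max' hDne ∈ S.descSet c' by
        have h2 := Finset.max'_mem D' hD'ne
        have : D.max' hDne = D'.max' hD'ne := Fin.ext heq
        rw [this]; simpa [hD'] using h2)
  · refine one_child_aux S hS hc' hc hc'v hcv (Ne.symm hne)
      (show D'.max' hD'ne ∈ S.descSet c' by have := Finset.max'_mem D' hD'ne; simpa [hD'] using this)
      (fun x hx => Finset.le_max' D' x (by simp [hD']; exact hx))
      (show D.min' hDne ∈ S.descSet c by have := Finset.min'_mem D hDne; simpa [hD] using this)
      (fun x hx => Finset.min'_le D x (by simp [hD]; exact hx)) ?_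
    by_contra hle
    push_neg at hle
    have hyD : D'.max' hD'ne ∈ S.descSet c := by
      refine descSet_interval S hS
        (show D.min' hDne ∈ S.descSet c by have := Finset.min'_mem D hDne; simpa [hD] using this)
        (show D.max' hDne ∈ S.descSet c by have := Finset.max'_mem D hDne; simpa [hD] using this)
        hle (le_of_lt hgt)
    exact desc_disjoint S hc hc' hne hyD
      (show D'.max' hD'ne ∈ S.descSet c' by have := Finset.max'_mem D' hD'ne; simpa [hD'] using this)

/-- A child subtree lies entirely on one side of the parent (large side). -/
lemma child_side_large {v c x : Fin n} (hc : S.parent c = some v) (hcv : v.val < c.val)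
    (hx : x ∈ S.descSet c) : v.val < x.val := by
  rcases lt_or_ge v.val x.val with h | h
  · exact h
  · exfalso
    apply not_anc_of_parent S hc
    rcases eq_or_lt_of_le h with h' | h'
    · exact (Fin.ext h' : x = v) ▸ hx
    · exact descSet_interval S hS hx (anc_refl S c) (le_of_lt h') (le_of_lt hcv)

/-- Auxiliary: the asymmetric main case, large side. -/
lemma one_child_aux_large {v c c' : Fin n} (hc : S.parent c = some v) (hc' : S.parent c' = some v)
    (hcv : v.val < c.val) (hc'v : v.val < c'.val) (hne : c ≠ c')
    {y w : Fin n}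
    (hyD : y ∈ S.descSet c) (hymin : ∀ x ∈ S.descSet c, y.val ≤ x.val)
    (hwD' : w ∈ S.descSet c') (hwmax : ∀ x ∈ S.descSet c', x.val ≤ w.val)
    (hwy : w.val < y.val) : False := by
  have hwgt : v.val < w.val := child_side_large S hS hc' hc'v hwD'
  have hypos : 1 ≤ y.val := by omega
  have hzlt : y.val - 1 < n := lt_trans (by omega) y.isLt
  set z : Fin n := ⟨y.val - 1, hzlt⟩ with hz
  have hzD : z ∉ S.descSet c := fun hmem => by
    have := hymin z hmem; simp [hz] at this; omega
  have hzdescv : z ∈ S.descSet v := by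
    have hyv : y ∈ S.descSet v :=
      anc_trans S ((anc_iff S).2 (Relation.ReflTransGen.single hc)) hyD
    have hwv : w ∈ S.descSet v :=
      anc_trans S ((anc_iff S).2 (Relation.ReflTransGen.single hc')) hwD'
    exact descSet_interval S hS hwv hyv (by simp only [hz]; omega) (by simp only [hz]; omega)
  rcases edge_comparable S hS (show z.val + 1 = y.val by simp only [hz]; omega) with h | h
  · -- z anc of y? edge_comparable gives Anc z y ∨ Anc y z
    -- here h : S.Anc z y
    have hcy : S.Anc c y := hyD
    rcases anc_comparable S h hcy with h1 | h1
    · rcases ((anc_iff S).1 h1).cases_head with rfl | ⟨t, ht, hrest⟩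
      · exact hzD (anc_refl S z)
      · have htv : v = t := by rw [rel, hc] at ht; exact Option.some.inj ht
        have hzv : S.Anc z v := (anc_iff S).2 (htv ▸ hrest)
        have : z = v := anc_antisymm S hzv hzdescv
        rw [Fin.ext_iff] at this
        simp [hz] at this
        omega
    · exact hzD h1
  · exact hzD (anc_trans S hyD h)

/-- At most one child of `v` on the large side. -/
lemma one_child_large {v c c' : Fin n} (hc : S.parent c = some v) (hc' : S.parent c' = some v)
    (hcv : v.val < c.val) (hc'v : v.val < c'.val) : c = c' := by
  classical
  by_contra hne
  set D : Finset (Fin n) := Finset.univ.filter (fun x => x ∈ S.descSet c) with hD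
  set D' : Finset (Fin n) := Finset.univ.filter (fun x => x ∈ S.descSet c') with hD'
  have hDne : D.Nonempty := ⟨c, by simp [hD]; exact anc_refl S c⟩
  have hD'ne : D'.Nonempty := ⟨c', by simp [hD']; exact anc_refl S c'⟩
  rcases lt_trichotomy (D.min' hDne).val (D'.min' hD'ne).val with hlt | heq | hgt
  · refine one_child_aux_large S hS hc' hc hc'v hcv (Ne.symm hne)
      (show D'.min' hD'ne ∈ S.descSet c' by have := Finset.min'_mem D' hD'ne; simpa [hD'] using this)
      (fun x hx => Finset.min'_le D' x (by simp [hD']; exact hx))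
      (show D.max' hDne ∈ S.descSet c by have := Finset.max'_mem D hDne; simpa [hD] using this)
      (fun x hx => Finset.le_max' D x (by simp [hD]; exact hx)) ?_
    by_contra hle
    push_neg at hle
    have : D'.min' hD'ne ∈ S.descSet c := by
      refine descSet_interval S hS
        (show D.min' hDne ∈ S.descSet c by have := Finset.min'_mem D hDne; simpa [hD] using this)
        (show D.max' hDne ∈ S.descSet c by have := Finset.max'_mem D hDne; simpa [hD] using this)
        (le_of_lt hlt) hle
    exact desc_disjoint S hc hc' hne this
      (show D'.min' hD'ne ∈ S.descSet c' by have := Finset.min'_mem D' hD'ne; simpa [hD'] using this)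
  · exact desc_disjoint S hc hc' hne
      (show D.min' hDne ∈ S.descSet c by have := Finset.min'_mem D hDne; simpa [hD] using this)
      (show D.min' hDne ∈ S.descSet c' by
        have h2 := Finset.min'_mem D' hD'ne
        have : D.min' hDne = D'.min' hD'ne := Fin.ext heq
        rw [this]; simpa [hD'] using h2)
  · refine one_child_aux_large S hS hc hc' hcv hc'v hne
      (show D.min' hDne ∈ S.descSet c by have := Finset.min'_mem D hDne; simpa [hD] using this)
      (fun x hx => Finset.min'_le D x (by simp [hD]; exact hx))
      (show D'.max' hD'ne ∈ S.descSet c' by have := Finset.max'_mem D' hD'ne; simpa [hD'] using this)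
      (fun x hx => Finset.le_max' D' x (by simp [hD']; exact hx)) ?_
    by_contra hle
    push_neg at hle
    have : D.min' hDne ∈ S.descSet c' := by
      refine descSet_interval S hS
        (show D'.min' hD'ne ∈ S.descSet c' by have := Finset.min'_mem D' hD'ne; simpa [hD'] using this)
        (show D'.max' hD'ne ∈ S.descSet c' by have := Finset.max'_mem D' hD'ne; simpa [hD'] using this)
        (le_of_lt hgt) hle
    exact desc_disjoint S hc hc' hne
      (show D.min' hDne ∈ S.descSet c by have := Finset.min'_mem D hDne; simpa [hD] using this) this

lemma children_card_le_two (v : Fin n) :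
    (Finset.univ.filter (fun c => S.parent c = some v)).card ≤ 2 := by
  classical
  set Ch := Finset.univ.filter (fun c => S.parent c = some v) with hCh
  have hsub : Ch ⊆ (Ch.filter (fun c => c.val < v.val)) ∪ (Ch.filter (fun c => v.val < c.val)) := by
    intro c hcmem
    have hcv : S.parent c = some v := by simpa [hCh] using hcmem
    have : c ≠ v := anc_ne_of_parent S hcv
    have : c.val ≠ v.val := fun h => this (Fin.ext h)
    rcases lt_or_gt_of_ne this with h | h
    · exact Finset.mem_union_left _ (Finset.mem_filter.2 ⟨hcmem, h⟩)
    · exact Finset.mem_union_right _ (Finset.mem_filter.2 ⟨hcmem, h⟩)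
  calc Ch.card ≤ _ := Finset.card_le_card hsub
  _ ≤ (Ch.filter (fun c => c.val < v.val)).card + (Ch.filter (fun c => v.val < c.val)).card :=
      Finset.card_union_le _ _
  _ ≤ 1 + 1 := by
      gcongr
      · exact Finset.card_le_one.2 (fun a ha b hb => by
          simp only [hCh, Finset.mem_filter, Finset.mem_univ, true_and] at ha hb
          exact one_child_small S hS ha.1 hb.1 ha.2 hb.2)
      · exact Finset.card_le_one.2 (fun a ha b hb => by
          simp only [hCh, Finset.mem_filter, Finset.mem_univ, true_and] at ha hb
          exact one_child_large S hS ha.1 hb.1 ha.2 hb.2)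

end LowerAux
/-! ### Entropy / Gibbs lemmas -/

namespace EntropyAux

lemma shannonH_nonneg {n : ℕ} (m : Fin n → ℕ) : 0 ≤ shannonH m := by
  unfold shannonH
  apply Finset.sum_nonneg
  intro i _
  split_ifs with h
  · apply mul_nonneg
    · apply div_nonneg (Nat.cast_nonneg _)
      exact Finset.sum_nonneg fun j _ => Nat.cast_nonneg _
    · apply Real.logb_nonneg one_lt_two
      rw [le_div_iff₀ (by exact_mod_cast h)]
      rw [one_mul]
      exact_mod_cast Finset.single_le_sum (f := fun j => (m j : ℝ))
        (fun j _ => Nat.cast_nonneg _) (Finset.mem_univ i)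
  · exact le_refl 0

lemma logb_two_four : Real.logb 2 4 = 2 := by
  rw [show (4:ℝ) = 2^2 by norm_num, Real.logb_pow]
  simp [Real.logb_self_eq_one]

/-- Gibbs' inequality: `H(m) * m ≤ ∑ m_i log2 (1/q_i)` when `∑ q ≤ 1`. -/
lemma gibbs {n : ℕ} (m : Fin n → ℕ) (q : Fin n → ℝ) (hq0 : ∀ i, 0 < q i)
    (hqsum : ∑ i, q i ≤ 1) :
    shannonH m * ((∑ i, m i : ℕ) : ℝ) ≤ ∑ i, (m i : ℝ) * Real.logb 2 (1 / q i) := by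
  classical
  rcases Nat.eq_zero_or_pos (∑ i, m i) with hm | hm
  · -- all weights zero
    have hz : ∀ i, m i = 0 := by
      intro i
      have := Finset.sum_eq_zero_iff.1 hm i (Finset.mem_univ i)
      exact this
    have h1 : shannonH m = 0 := by
      unfold shannonH
      apply Finset.sum_eq_zero
      intro i _
      rw [hz i]
      simp
    rw [h1, zero_mul]
    apply Finset.sum_nonneg
    intro i _
    rw [hz i]
    simp
  · set mR : ℝ := ((∑ i, m i : ℕ) : ℝ) with hmRdef
    have hmReq : (∑ j, (m j : ℝ)) = mR := by rw [hmRdef]; push_cast; rfl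
    have hmRpos : (0:ℝ) < mR := by rw [hmRdef]; exact_mod_cast hm
    set pos : Finset (Fin n) := Finset.univ.filter (fun i => 0 < m i) with hpos
    -- rewrite H * mR
    have hH : shannonH m * mR = ∑ i ∈ pos, (m i : ℝ) * Real.logb 2 (mR / (m i : ℝ)) := by
      unfold shannonH
      rw [Finset.sum_mul, hpos, Finset.sum_filter]
      apply Finset.sum_congr rfl
      intro i _
      split_ifs with h
      · rw [hmReq]
        field_simp
      · rw [zero_mul]
    -- RHS restricted to pos
    have hB : ∑ i, (m i : ℝ) * Real.logb 2 (1 / q i)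
        = ∑ i ∈ pos, (m i : ℝ) * Real.logb 2 (1 / q i) := by
      symm
      apply Finset.sum_subset (Finset.filter_subset _ _)
      intro x _ hx
      simp only [Finset.mem_filter, Finset.mem_univ, true_and, not_lt, Nat.le_zero] at hx
      rw [hx]
      simp
    rw [hH, hB]
    rw [← sub_nonpos, ← Finset.sum_sub_distrib]
    have hstep : ∀ i ∈ pos, (m i : ℝ) * Real.logb 2 (mR / (m i : ℝ))
        - (m i : ℝ) * Real.logb 2 (1 / q i)
        = (m i : ℝ) * Real.logb 2 (q i * mR / (m i : ℝ)) := by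
      intro i hi
      rw [hpos, Finset.mem_filter] at hi
      have hmi : (0:ℝ) < (m i : ℝ) := by exact_mod_cast hi.2
      rw [← mul_sub, ← Real.logb_div (ne_of_gt (div_pos hmRpos hmi))
        (ne_of_gt (div_pos one_pos (hq0 i)))]
      congr 2
      field_simp
    rw [Finset.sum_congr rfl hstep]
    -- now use log x ≤ x - 1
    have hlog : ∀ i ∈ pos, (m i : ℝ) * Real.logb 2 (q i * mR / (m i : ℝ))
        ≤ (m i : ℝ) * ((q i * mR / (m i : ℝ)) - 1) / Real.log 2 := by
      intro i hi
      rw [hpos, Finset.mem_filter] at hi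
      have hmi : (0:ℝ) < (m i : ℝ) := by exact_mod_cast hi.2
      have hx : (0:ℝ) < q i * mR / (m i : ℝ) := div_pos (mul_pos (hq0 i) hmRpos) hmi
      have hle := Real.log_le_sub_one_of_pos hx
      have h2 : (0:ℝ) < Real.log 2 := Real.log_pos one_lt_two
      calc (m i : ℝ) * Real.logb 2 (q i * mR / (m i : ℝ))
          = (m i : ℝ) * Real.log (q i * mR / (m i : ℝ)) / Real.log 2 := by
            rw [Real.logb]; ring
      _ ≤ (m i : ℝ) * ((q i * mR / (m i : ℝ)) - 1) / Real.log 2 := by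
            gcongr
      _ = _ := rfl
    calc ∑ i ∈ pos, (m i : ℝ) * Real.logb 2 (q i * mR / (m i : ℝ))
        ≤ ∑ i ∈ pos, (m i : ℝ) * ((q i * mR / (m i : ℝ)) - 1) / Real.log 2 :=
          Finset.sum_le_sum hlog
    _ = (∑ i ∈ pos, (q i * mR - (m i : ℝ))) / Real.log 2 := by
          rw [← Finset.sum_div]
          congr 1
          apply Finset.sum_congr rfl
          intro i hi
          rw [hpos, Finset.mem_filter] at hi
          have hmi : (0:ℝ) < (m i : ℝ) := by exact_mod_cast hi.2
          field_simp
    _ ≤ 0 := by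
          have hsq : ∑ i ∈ pos, q i ≤ 1 := by
            refine le_trans (Finset.sum_le_sum_of_subset_of_nonneg
              (Finset.filter_subset _ _) (fun i _ _ => (hq0 i).le)) hqsum
          have hsm : ∑ i ∈ pos, (m i : ℝ) = mR := by
            rw [hmRdef]
            push_cast
            apply Finset.sum_subset (Finset.filter_subset _ _)
            intro x _ hx
            simp only [Finset.mem_filter, Finset.mem_univ, true_and, not_lt, Nat.le_zero] at hx
            rw [hx]; simp
          have hnum : ∑ i ∈ pos, (q i * mR - (m i : ℝ)) ≤ 0 := by
            rw [Finset.sum_sub_distrib, hsm, ← Finset.sum_mul]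
            nlinarith
          have hlog2 : (0:ℝ) ≤ Real.log 2 := (Real.log_pos one_lt_two).le
          exact div_nonpos_iff.mpr (Or.inr ⟨hnum, hlog2⟩)
end EntropyAux
/-! ### Lower bound assembly -/

namespace LowerAux

open RTreeAux

variable {n : ℕ} (S : RTree (Fin n)) (hS : IsSTG (SimpleGraph.pathGraph n) S)
include hS

lemma depth_level_card (d : ℕ) :
    (Finset.univ.filter (fun v : Fin n => S.depth v = d + 1)).card ≤ 2 ^ d := by
  classical
  induction d with
  | zero =>
    simp only [pow_zero]
    apply Finset.card_le_one.2
    intro a ha b hb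
    simp only [Finset.mem_filter, Finset.mem_univ, true_and] at ha hb
    have hpa := parent_none_of_depth_one S ha
    have hpb := parent_none_of_depth_one S hb
    have hsupp := hS.1
    exact S.root_unique a (by rw [hsupp]; exact Finset.mem_univ a)
      b (by rw [hsupp]; exact Finset.mem_univ b) hpa hpb
  | succ d ih =>
    have hsub : (Finset.univ.filter (fun v : Fin n => S.depth v = d + 2))
        ⊆ (Finset.univ.filter (fun v : Fin n => S.depth v = d + 1)).biUnion
          (fun w => Finset.univ.filter (fun c => S.parent c = some w)) := by
      intro v hv
      simp only [Finset.mem_filter, Finset.mem_univ, true_and] at hv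
      rcases hp : S.parent v with _ | w
      · rw [depth_root S hp] at hv; omega
      · have hw : S.depth w = d + 1 := by
          have := depth_parent S hp
          omega
        exact Finset.mem_biUnion.2 ⟨w, by simp [hw], by simp [hp]⟩
    calc (Finset.univ.filter (fun v : Fin n => S.depth v = d + 1 + 1)).card
        = (Finset.univ.filter (fun v : Fin n => S.depth v = d + 2)).card := by norm_num
    _ ≤ _ := Finset.card_le_card hsub
    _ ≤ ∑ w ∈ Finset.univ.filter (fun v : Fin n => S.depth v = d + 1),
          (Finset.univ.filter (fun c => S.parent c = some w)).card := Finset.card_biUnion_le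
    _ ≤ (Finset.univ.filter (fun v : Fin n => S.depth v = d + 1)).card • 2 :=
          Finset.sum_le_card_nsmul _ _ 2 (fun w _ => children_card_le_two S hS w)
    _ ≤ 2 ^ d • 2 := by
          simp only [smul_eq_mul]
          exact Nat.mul_le_mul_right 2 ih
    _ = 2 ^ (d + 1) := by rw [smul_eq_mul]; ring

lemma sum_q_le_one : ∑ i : Fin n, ((1:ℝ)/4) ^ (S.depth i) ≤ 1 := by
  classical
  rcases Nat.eq_zero_or_pos n with rfl | hn
  · simp
  have hmap : ∀ i : Fin n, i ∈ Finset.univ → S.depth i - 1 ∈ Finset.range n := by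
    intro i _
    have h1 := one_le_depth S i
    have h2 := depth_le_card S i
    rw [Fintype.card_fin] at h2
    simp only [Finset.mem_range]
    omega
  rw [← Finset.sum_fiberwise_of_maps_to hmap (fun i => ((1:ℝ)/4) ^ (S.depth i))]
  have hinner : ∀ d ∈ Finset.range n,
      ∑ i ∈ Finset.univ.filter (fun i : Fin n => S.depth i - 1 = d), ((1:ℝ)/4) ^ (S.depth i)
      ≤ (2:ℝ) ^ d * ((1:ℝ)/4) ^ (d+1) := by
    intro d _
    have heq : ∀ i ∈ Finset.univ.filter (fun i : Fin n => S.depth i - 1 = d),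
        ((1:ℝ)/4) ^ (S.depth i) = ((1:ℝ)/4) ^ (d+1) := by
      intro i hi
      simp only [Finset.mem_filter, Finset.mem_univ, true_and] at hi
      have h1 := one_le_depth S i
      congr 1
      omega
    rw [Finset.sum_congr rfl heq, Finset.sum_const, nsmul_eq_mul]
    have hcard : (Finset.univ.filter (fun i : Fin n => S.depth i - 1 = d)).card ≤ 2 ^ d := by
      refine le_trans (Finset.card_le_card ?_) (depth_level_card S hS d)
      intro i hi
      simp only [Finset.mem_filter, Finset.mem_univ, true_and] at hi ⊢
      have h1 := one_le_depth S i
      omega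
    apply mul_le_mul_of_nonneg_right _ (by positivity)
    calc ((Finset.univ.filter (fun i : Fin n => S.depth i - 1 = d)).card : ℝ)
        ≤ ((2:ℕ) ^ d : ℝ) := by exact_mod_cast hcard
    _ = (2:ℝ) ^ d := by push_cast; ring
  calc ∑ d ∈ Finset.range n, ∑ i ∈ Finset.univ.filter (fun i : Fin n => S.depth i - 1 = d),
        ((1:ℝ)/4) ^ (S.depth i)
      ≤ ∑ d ∈ Finset.range n, (2:ℝ) ^ d * ((1:ℝ)/4) ^ (d+1) := Finset.sum_le_sum hinner
  _ = ∑ d ∈ Finset.range n, ((1:ℝ)/4) * ((1:ℝ)/2) ^ d := by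
        apply Finset.sum_congr rfl
        intro d _
        rw [pow_succ, div_pow, one_pow, (show (4:ℝ) = 2*2 by norm_num), mul_pow]
        have h2 : (2:ℝ)^d ≠ 0 := pow_ne_zero _ (by norm_num)
        field_simp
        rw [← mul_pow]; norm_num
  _ = ((1:ℝ)/4) * ∑ d ∈ Finset.range n, ((1:ℝ)/2) ^ d := by rw [Finset.mul_sum]
  _ ≤ ((1:ℝ)/4) * 2 := by
        apply mul_le_mul_of_nonneg_left (sum_geometric_two_le n) (by norm_num)
  _ ≤ 1 := by norm_num

/-- The lower bound. -/
lemma lower_bound (m : Fin n → ℕ) :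
    (1/2 : ℝ) * shannonH m * ((∑ i, m i : ℕ) : ℝ) ≤ ∑ i, (m i : ℝ) * (S.depth i : ℝ) := by
  have hg := EntropyAux.gibbs m (fun i => ((1:ℝ)/4) ^ (S.depth i))
    (fun i => pow_pos (by norm_num) _) (sum_q_le_one S hS)
  have hlog : ∀ i : Fin n,
      Real.logb 2 (1 / (((1:ℝ)/4) ^ (S.depth i))) = 2 * (S.depth i : ℝ) := by
    intro i
    rw [one_div, ← inv_pow, (show ((1:ℝ)/4)⁻¹ = 4 by norm_num), Real.logb_pow,
      EntropyAux.logb_two_four]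
    ring
  have hsum : ∑ i, (m i : ℝ) * Real.logb 2 (1 / (((1:ℝ)/4) ^ (S.depth i)))
      = 2 * ∑ i, (m i : ℝ) * (S.depth i : ℝ) := by
    rw [Finset.mul_sum]
    apply Finset.sum_congr rfl
    intro i _
    rw [hlog i]
    ring
  rw [hsum] at hg
  linarith

end LowerAux
/-! ### Upper bound: weight-balanced BST construction -/

namespace UpperAux

inductive IT : Type where
  | leaf : IT
  | node (l : IT) (k : ℕ) (r : IT) : IT

variable (M : ℕ → ℕ)

/-- Weight of the interval `[a, b)`. -/
def W (a b : ℕ) : ℕ := ∑ j ∈ Finset.Ico a b, M j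

lemma W_split {a b c : ℕ} (hab : a ≤ b) (hbc : b ≤ c) : W M a b + W M b c = W M a c :=
  Finset.sum_Ico_consecutive _ hab hbc

lemma single_le_W {a b x : ℕ} (ha : a ≤ x) (hb : x < b) : M x ≤ W M a b :=
  Finset.single_le_sum (f := fun j => M j) (fun j _ => Nat.zero_le _)
    (Finset.mem_Ico.2 ⟨ha, hb⟩)

/-- Split point: least `j < f` such that the prefix `[lo, lo+j]` has more than
half the total weight; `0` if the total weight is zero. -/
def pick (lo f : ℕ) : ℕ :=
  if h : ∃ j, j < f ∧ 2 * W M lo (lo + j + 1) > W M lo (lo + f) then Nat.find h else 0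

lemma pick_lt {lo f : ℕ} (hf : 0 < f) : pick M lo f < f := by
  unfold pick
  split_ifs with h
  · exact (Nat.find_spec h).1
  · exact hf

lemma pick_left (lo f : ℕ) :
    2 * W M lo (lo + pick M lo f) ≤ W M lo (lo + f) := by
  unfold pick
  split_ifs with h
  · rcases Nat.eq_zero_or_pos (Nat.find h) with h0 | h0
    · rw [h0]
      simp [W]
    · obtain ⟨j, hjeq⟩ : ∃ j, Nat.find h = j + 1 := ⟨Nat.find h - 1, by omega⟩
      have hmin := Nat.find_min h (m := j) (by omega)
      push_neg at hmin
      have hjf : j < f := by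
        have := (Nat.find_spec h).1
        omega
      have hres := hmin hjf
      rw [hjeq]
      calc 2 * W M lo (lo + (j + 1)) = 2 * W M lo (lo + j + 1) := by ring_nf
      _ ≤ W M lo (lo + f) := hres
  · simp [W]

lemma pick_right {lo f : ℕ} (hf : 0 < f) :
    2 * W M (lo + pick M lo f + 1) (lo + f) ≤ W M lo (lo + f) := by
  have hj : pick M lo f < f := pick_lt M hf
  have hsplit : W M lo (lo + pick M lo f + 1) + W M (lo + pick M lo f + 1) (lo + f)
      = W M lo (lo + f) := W_split M (by omega) (by omega)
  unfold pick at hj hsplit ⊢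
  split_ifs with h
  · split_ifs at hj hsplit
    have hspec := (Nat.find_spec h).2
    omega
  · -- total weight is zero
    split_ifs at hj hsplit
    have hzero : ¬ (f - 1 < f ∧ 2 * W M lo (lo + (f-1) + 1) > W M lo (lo + f)) := by
      intro hc
      exact h ⟨f - 1, hc⟩
    push_neg at hzero
    have h1 := hzero (by omega)
    have h2 : lo + (f-1) + 1 = lo + f := by omega
    rw [h2] at h1
    omega

def build : ℕ → ℕ → IT
  | _, 0 => .leaf
  | lo, f+1 =>
    .node (build lo (min (pick M lo (f+1)) f)) (lo + min (pick M lo (f+1)) f)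
      (build (lo + min (pick M lo (f+1)) f + 1) (f - min (pick M lo (f+1)) f))
  termination_by lo f => f
  decreasing_by
  · exact Nat.lt_succ_of_le (min_le_right _ _)
  · exact Nat.lt_succ_of_le (Nat.sub_le _ _)

lemma min_pick (lo f : ℕ) : min (pick M lo (f+1)) f = pick M lo (f+1) :=
  min_eq_left (by have := pick_lt M (lo := lo) (f := f+1) (by omega); omega)

lemma build_succ (lo f : ℕ) :
    build M lo (f+1) = .node (build M lo (pick M lo (f+1))) (lo + pick M lo (f+1))
      (build M (lo + pick M lo (f+1) + 1) (f - pick M lo (f+1))) := by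
  rw [build, min_pick]

def rootk : IT → ℕ
  | .leaf => 0
  | .node _ k _ => k

def par : IT → ℕ → Option ℕ → Option ℕ
  | .leaf, _, _ => none
  | .node l k r, x, acc => if x = k then acc else if x < k then par l x (some k) else par r x (some k)

def sdep : IT → ℕ → ℕ
  | .leaf, _ => 0
  | .node l k r, x => if x = k then 1 else if x < k then sdep l x + 1 else sdep r x + 1

/-- `onPath t a x` : `a` lies on the search path for `x` in `t`. -/
def onPath : IT → ℕ → ℕ → Prop
  | .leaf, _, _ => False
  | .node l k r, a, x =>
      if x = k then a = k else if x < k then (a = k ∨ onPath l a x) else (a = k ∨ onPath r a x)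

/-- The search path for `x`, as a finset. -/
def pathF : IT → ℕ → Finset ℕ
  | .leaf, _ => ∅
  | .node l k r, x => if x = k then {k} else if x < k then insert k (pathF l x)
      else insert k (pathF r x)

lemma par_rootk (l r : IT) (k : ℕ) (acc : Option ℕ) : par (.node l k r) k acc = acc := by
  simp [par]

/-- B1: the root key lies in the interval. -/
lemma rootk_mem {lo f : ℕ} (hf : 0 < f) :
    lo ≤ rootk (build M lo f) ∧ rootk (build M lo f) < lo + f := by
  obtain ⟨f, rfl⟩ : ∃ g, f = g + 1 := ⟨f - 1, by omega⟩
  rw [build_succ]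
  have := pick_lt M (lo := lo) (f := f+1) (by omega)
  simp only [rootk]
  omega

/-- C13: searching for a key outside the interval falls off the tree. -/
lemma par_outside : ∀ f lo x acc, (x < lo ∨ lo + f ≤ x) →
    par (build M lo f) x acc = none := by
  intro f
  induction f using Nat.strong_induction_on with
  | _ f ih =>
    match f with
    | 0 => intro lo x acc _; simp [build, par]
    | f+1 =>
      intro lo x acc hx
      rw [build_succ]
      have hp := pick_lt M (lo := lo) (f := f+1) (by omega)
      set j := pick M lo (f+1) with hj
      simp only [par]
      have hxk : x ≠ lo + j := by omega
      rw [if_neg hxk]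
      split_ifs with h
      · exact ih j (by omega) lo x _ (by omega)
      · exact ih (f - j) (by omega) (lo + j + 1) x _ (by omega)

/-- B2/C6: every element of a search path is a key of the tree. -/
lemma pathF_subset : ∀ f lo x, pathF (build M lo f) x ⊆ Finset.Ico lo (lo + f) := by
  intro f
  induction f using Nat.strong_induction_on with
  | _ f ih =>
    match f with
    | 0 => intro lo x; simp [build, pathF]
    | f+1 =>
      intro lo x
      rw [build_succ]
      have hp := pick_lt M (lo := lo) (f := f+1) (by omega)
      set j := pick M lo (f+1) with hj
      simp only [pathF]
      split_ifs with h1 h2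
      · intro a ha
        simp only [Finset.mem_singleton] at ha
        simp [ha]
        omega
      · intro a ha
        rcases Finset.mem_insert.1 ha with rfl | ha
        · simp; omega
        · have := ih j (by omega) lo x ha
          simp only [Finset.mem_Ico] at this ⊢
          omega
      · intro a ha
        rcases Finset.mem_insert.1 ha with rfl | ha
        · simp; omega
        · have := ih (f - j) (by omega) (lo + j + 1) x ha
          simp only [Finset.mem_Ico] at this ⊢
          omega

/-- C7: `onPath` is membership in `pathF`. -/
lemma onPath_iff_mem : ∀ (t : IT) (a x : ℕ), onPath t a x ↔ a ∈ pathF t x := by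
  intro t
  induction t with
  | leaf => intro a x; simp [onPath, pathF]
  | node l k r ihl ihr =>
    intro a x
    simp only [onPath, pathF]
    split_ifs with h1 h2
    · simp
    · rw [Finset.mem_insert, ihl]
    · rw [Finset.mem_insert, ihr]

/-- C8: the length of the search path of a key equals the search depth. -/
lemma pathF_card : ∀ f lo x, lo ≤ x → x < lo + f →
    (pathF (build M lo f) x).card = sdep (build M lo f) x := by
  intro f
  induction f using Nat.strong_induction_on with
  | _ f ih =>
    match f with
    | 0 => intro lo x h1 h2; omega
    | f+1 =>
      intro lo x h1 h2
      rw [build_succ]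
      have hp := pick_lt M (lo := lo) (f := f+1) (by omega)
      set j := pick M lo (f+1) with hj
      simp only [pathF, sdep]
      split_ifs with hxk hxlt
      · simp
      · rw [Finset.card_insert_of_notMem, ih j (by omega) lo x h1 (by omega)]
        intro hmem
        have := pathF_subset M j lo x hmem
        simp only [Finset.mem_Ico] at this
        omega
      · rw [Finset.card_insert_of_notMem, ih (f - j) (by omega) (lo + j + 1) x (by omega) (by omega)]
        intro hmem
        have := pathF_subset M (f - j) (lo + j + 1) x hmem
        simp only [Finset.mem_Ico] at this
        omega

/-- C11: a key is on its own search path. -/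
lemma onPath_self : ∀ f lo x, lo ≤ x → x < lo + f → onPath (build M lo f) x x := by
  intro f
  induction f using Nat.strong_induction_on with
  | _ f ih =>
    match f with
    | 0 => intro lo x h1 h2; omega
    | f+1 =>
      intro lo x h1 h2
      rw [build_succ]
      have hp := pick_lt M (lo := lo) (f := f+1) (by omega)
      set j := pick M lo (f+1) with hj
      simp only [onPath]
      split_ifs with hxk hxlt
      · exact hxk
      · exact Or.inr (ih j (by omega) lo x h1 (by omega))
      · exact Or.inr (ih (f - j) (by omega) (lo + j + 1) x (by omega) (by omega))

/-- C12: weight-balance gives the depth bound. -/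
lemma sdep_bound : ∀ f lo x, lo ≤ x → x < lo + f →
    M x * 2 ^ (sdep (build M lo f) x) ≤ 2 * W M lo (lo + f) := by
  intro f
  induction f using Nat.strong_induction_on with
  | _ f ih =>
    match f with
    | 0 => intro lo x h1 h2; omega
    | f+1 =>
      intro lo x h1 h2
      have hleft := pick_left M lo (f+1)
      have hright := pick_right M (lo := lo) (f := f+1) (by omega)
      rw [build_succ]
      have hp := pick_lt M (lo := lo) (f := f+1) (by omega)
      set j := pick M lo (f+1) with hj
      simp only [sdep]
      split_ifs with hxk hxlt
      · have := single_le_W M (a := lo) (b := lo + (f+1)) h1 h2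
        rw [pow_one]
        omega
      · have hb := ih j (by omega) lo x h1 (by omega)
        calc M x * 2 ^ (sdep (build M lo j) x + 1)
            = 2 * (M x * 2 ^ (sdep (build M lo j) x)) := by ring
        _ ≤ 2 * (2 * W M lo (lo + j)) := by omega
        _ ≤ 2 * W M lo (lo + (f+1)) := by omega
      · have hb := ih (f - j) (by omega) (lo + j + 1) x (by omega) (by omega)
        have heq : lo + j + 1 + (f - j) = lo + (f + 1) := by omega
        rw [heq] at hb
        calc M x * 2 ^ (sdep (build M (lo + j + 1) (f - j)) x + 1)
            = 2 * (M x * 2 ^ (sdep (build M (lo + j + 1) (f - j)) x)) := by ring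
        _ ≤ 2 * (2 * W M (lo + j + 1) (lo + (f+1))) := by omega
        _ ≤ 2 * W M lo (lo + (f+1)) := by
              have : lo + j + 1 + (f - j) = lo + (f+1) := by omega
              rw [← this] at hright ⊢
              omega

/-- C10: adjacent keys are comparable. -/
lemma adjacent_onPath : ∀ f lo x, lo ≤ x → x + 1 < lo + f →
    onPath (build M lo f) x (x+1) ∨ onPath (build M lo f) (x+1) x := by
  intro f
  induction f using Nat.strong_induction_on with
  | _ f ih =>
    match f with
    | 0 => intro lo x h1 h2; omega
    | f+1 =>
      intro lo x h1 h2
      rw [build_succ]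
      have hp := pick_lt M (lo := lo) (f := f+1) (by omega)
      set j := pick M lo (f+1) with hj
      rcases lt_trichotomy x (lo + j) with hx | hx | hx
      · rcases eq_or_lt_of_le (show x + 1 ≤ lo + j by omega) with hx1 | hx1
        · -- x + 1 = k : k is on the path of x
          right
          simp only [onPath]
          rw [if_neg (by omega), if_pos (by omega)]
          exact Or.inl hx1
        · -- both in the left subtree
          rcases ih j (by omega) lo x h1 (by omega) with h | h
          · left; simp only [onPath]; rw [if_neg (by omega), if_pos hx1]; exact Or.inr h
          · right; simp only [onPath]; rw [if_neg (by omega), if_pos hx]; exact Or.inr h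
      · -- x = k
        left
        simp only [onPath]
        rw [if_neg (by omega), if_neg (by omega)]
        exact Or.inl hx
      · -- both in the right subtree
        have hr := ih (f - j) (by omega) (lo + j + 1) x (by omega) (by omega)
        rcases hr with h | h
        · left; simp only [onPath]; rw [if_neg (by omega), if_neg (by omega)]; exact Or.inr h
        · right; simp only [onPath]; rw [if_neg (by omega), if_neg (by omega)]; exact Or.inr h

end UpperAux
namespace UpperAux

variable (M : ℕ → ℕ) (n : ℕ)

/-- The global parent function on `ℕ`. -/
def F (x : ℕ) : Option ℕ := par (build M 0 n) x none

def relF (a b : ℕ) : Prop := F M n a = some b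

/-- C3: a non-root key has a parent inside the interval. -/
lemma par_ne_root : ∀ f lo (acc : Option ℕ) x, lo ≤ x → x < lo + f →
    x ≠ rootk (build M lo f) →
    ∃ y, par (build M lo f) x acc = some y ∧ lo ≤ y ∧ y < lo + f := by
  intro f
  induction f using Nat.strong_induction_on with
  | _ f ih =>
    match f with
    | 0 => intro lo acc x h1 h2; omega
    | f+1 =>
      intro lo acc x h1 h2 hroot
      rw [build_succ] at hroot ⊢
      have hp := pick_lt M (lo := lo) (f := f+1) (by omega)
      set j := pick M lo (f+1) with hj
      simp only [rootk] at hroot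
      simp only [par]
      rw [if_neg hroot]
      split_ifs with hlt
      · -- left subtree, which is nonempty
        by_cases hxr : x = rootk (build M lo j)
        · rw [hxr, par_self_root M (by omega)]
          exact ⟨lo + j, rfl, by omega, by omega⟩
        · obtain ⟨y, hy, hy1, hy2⟩ := ih j (by omega) lo (some (lo + j)) x h1 (by omega) hxr
          exact ⟨y, hy, by omega, by omega⟩
      · by_cases hxr : x = rootk (build M (lo + j + 1) (f - j))
        · rw [hxr, par_self_root M (by omega)]
          exact ⟨lo + j, rfl, by omega, by omega⟩
        · obtain ⟨y, hy, hy1, hy2⟩ := ih (f - j) (by omega) (lo + j + 1) (some (lo + j)) x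
            (by omega) (by omega) hxr
          exact ⟨y, hy, by omega, by omega⟩
where
  par_self_root : ∀ {f lo : ℕ} (M : ℕ → ℕ), 0 < f → ∀ (acc : Option ℕ),
      par (build M lo f) (rootk (build M lo f)) acc = acc := by
    intro f lo M hf acc
    obtain ⟨g, rfl⟩ : ∃ g, f = g + 1 := ⟨f - 1, by omega⟩
    rw [build_succ]
    simp [rootk, par]

/-- C1/C2: every key reaches the root, and the root's parent is `acc`. -/
lemma reach_and_Froot : ∀ f lo (acc : Option ℕ),
    (∀ y, lo ≤ y → y < lo + f → F M n y = par (build M lo f) y acc) →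
    ∀ x, lo ≤ x → x < lo + f →
      Relation.ReflTransGen (relF M n) x (rootk (build M lo f)) ∧
        F M n (rootk (build M lo f)) = acc := by
  intro f
  induction f using Nat.strong_induction_on with
  | _ f ih =>
    match f with
    | 0 => intro lo acc _ x h1 h2; omega
    | f+1 =>
      intro lo acc hF x h1 h2
      rw [build_succ]
      have hp := pick_lt M (lo := lo) (f := f+1) (by omega)
      set j := pick M lo (f+1) with hj
      simp only [rootk]
      have hFk : F M n (lo + j) = acc := by
        rw [hF (lo + j) (by omega) (by omega), build_succ, ← hj, par]
        simp
      refine ⟨?_, hFk⟩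
      rcases lt_trichotomy x (lo + j) with hx | hx | hx
      · have hF' : ∀ y, lo ≤ y → y < lo + j → F M n y = par (build M lo j) y (some (lo + j)) := by
          intro y hy1 hy2
          rw [hF y (by omega) (by omega), build_succ, ← hj, par]
          rw [if_neg (by omega), if_pos (by omega)]
        obtain ⟨hchain, hroot⟩ := ih j (by omega) lo (some (lo + j)) hF' x h1 (by omega)
        exact hchain.tail hroot
      · rw [hx]
      · have hF' : ∀ y, lo + j + 1 ≤ y → y < lo + j + 1 + (f - j) →
            F M n y = par (build M (lo + j + 1) (f - j)) y (some (lo + j)) := by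
          intro y hy1 hy2
          rw [hF y (by omega) (by omega), build_succ, ← hj, par]
          rw [if_neg (by omega), if_neg (by omega)]
        obtain ⟨hchain, hroot⟩ := ih (f - j) (by omega) (lo + j + 1) (some (lo + j)) hF' x
          (by omega) (by omega)
        exact hchain.tail hroot

/-- C4: ancestors lie on the search path (or beyond `acc`). -/
lemma anc_to_onPath : ∀ f lo (acc : Option ℕ),
    (∀ y, lo ≤ y → y < lo + f → F M n y = par (build M lo f) y acc) →
    ∀ x, lo ≤ x → x < lo + f → ∀ a, Relation.ReflTransGen (relF M n) x a →
      onPath (build M lo f) a x ∨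
        ∃ w, acc = some w ∧ Relation.ReflTransGen (relF M n) w a := by
  intro f
  induction f using Nat.strong_induction_on with
  | _ f ih =>
    match f with
    | 0 => intro lo acc _ x h1 h2; omega
    | f+1 =>
      intro lo acc hF x h1 h2 a hchain
      rw [build_succ]
      have hp := pick_lt M (lo := lo) (f := f+1) (by omega)
      set j := pick M lo (f+1) with hj
      have hFk : F M n (lo + j) = acc := by
        rw [hF (lo + j) (by omega) (by omega), build_succ, ← hj, par]
        simp
      rcases lt_trichotomy x (lo + j) with hx | hx | hx
      · have hF' : ∀ y, lo ≤ y → y < lo + j → F M n y = par (build M lo j) y (some (lo + j)) := by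
          intro y hy1 hy2
          rw [hF y (by omega) (by omega), build_succ, ← hj, par]
          rw [if_neg (by omega), if_pos (by omega)]
        rcases ih j (by omega) lo (some (lo + j)) hF' x h1 (by omega) a hchain with h | ⟨w, hw, hwa⟩
        · left
          simp only [onPath]
          rw [if_neg (by omega), if_pos hx]
          exact Or.inr h
        · have hwk : w = lo + j := by injection hw.symm
          subst hwk
          rcases hwa.cases_head with rfl | ⟨c, hc, hca⟩
          · left
            simp only [onPath]
            rw [if_neg (by omega), if_pos hx]
            exact Or.inl trivial
          · right
            rw [relF, hFk] at hc
            exact ⟨c, hc, hca⟩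
      · -- x is the root
        rcases hchain.cases_head with rfl | ⟨c, hc, hca⟩
        · left
          simp only [onPath]
          rw [hx, if_pos rfl]
        · right
          rw [relF, hx, hFk] at hc
          exact ⟨c, hc, hca⟩
      · have hF' : ∀ y, lo + j + 1 ≤ y → y < lo + j + 1 + (f - j) →
            F M n y = par (build M (lo + j + 1) (f - j)) y (some (lo + j)) := by
          intro y hy1 hy2
          rw [hF y (by omega) (by omega), build_succ, ← hj, par]
          rw [if_neg (by omega), if_neg (by omega)]
        rcases ih (f - j) (by omega) (lo + j + 1) (some (lo + j)) hF' x (by omega) (by omega)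
            a hchain with h | ⟨w, hw, hwa⟩
        · left
          simp only [onPath]
          rw [if_neg (by omega), if_neg (by omega)]
          exact Or.inr h
        · have hwk : w = lo + j := by injection hw.symm
          subst hwk
          rcases hwa.cases_head with rfl | ⟨c, hc, hca⟩
          · left
            simp only [onPath]
            rw [if_neg (by omega), if_neg (by omega)]
            exact Or.inl trivial
          · right
            rw [relF, hFk] at hc
            exact ⟨c, hc, hca⟩

/-- C5: points on the search path are ancestors. -/
lemma onPath_to_anc : ∀ f lo (acc : Option ℕ),
    (∀ y, lo ≤ y → y < lo + f → F M n y = par (build M lo f) y acc) →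
    ∀ x, lo ≤ x → x < lo + f → ∀ a, onPath (build M lo f) a x →
      Relation.ReflTransGen (relF M n) x a := by
  intro f
  induction f using Nat.strong_induction_on with
  | _ f ih =>
    match f with
    | 0 => intro lo acc _ x h1 h2; omega
    | f+1 =>
      intro lo acc hF x h1 h2 a hpath
      rw [build_succ] at hpath
      have hp := pick_lt M (lo := lo) (f := f+1) (by omega)
      set j := pick M lo (f+1) with hj
      simp only [onPath] at hpath
      rcases lt_trichotomy x (lo + j) with hx | hx | hx
      · rw [if_neg (by omega), if_pos hx] at hpath
        have hF' : ∀ y, lo ≤ y → y < lo + j → F M n y = par (build M lo j) y (some (lo + j)) := by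
          intro y hy1 hy2
          rw [hF y (by omega) (by omega), build_succ, ← hj, par]
          rw [if_neg (by omega), if_pos (by omega)]
        rcases hpath with rfl | hpath
        · obtain ⟨hchain, hroot⟩ := reach_and_Froot M n j lo (some (lo + j)) hF' x h1 (by omega)
          exact hchain.tail hroot
        · exact ih j (by omega) lo (some (lo + j)) hF' x h1 (by omega) a hpath
      · rw [if_pos hx] at hpath
        rw [hpath, ← hx]
      · rw [if_neg (by omega), if_neg (by omega)] at hpath
        have hF' : ∀ y, lo + j + 1 ≤ y → y < lo + j + 1 + (f - j) →
            F M n y = par (build M (lo + j + 1) (f - j)) y (some (lo + j)) := by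
          intro y hy1 hy2
          rw [hF y (by omega) (by omega), build_succ, ← hj, par]
          rw [if_neg (by omega), if_neg (by omega)]
        rcases hpath with rfl | hpath
        · obtain ⟨hchain, hroot⟩ := reach_and_Froot M n (f - j) (lo + j + 1) (some (lo + j)) hF' x
            (by omega) (by omega)
          exact hchain.tail hroot
        · exact ih (f - j) (by omega) (lo + j + 1) (some (lo + j)) hF' x (by omega) (by omega)
            a hpath

end UpperAux
namespace UpperAux

variable (M : ℕ → ℕ) (n : ℕ)

/-- C9: the set of descendants (in `onPath` form) of a key is an interval. -/
lemma onPath_interval : ∀ f lo v, lo ≤ v → v < lo + f →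
    ∃ a b, lo ≤ a ∧ a ≤ v ∧ v < b ∧ b ≤ lo + f ∧
      ∀ x, lo ≤ x → x < lo + f → (onPath (build M lo f) v x ↔ (a ≤ x ∧ x < b)) := by
  intro f
  induction f using Nat.strong_induction_on with
  | _ f ih =>
    match f with
    | 0 => intro lo v h1 h2; omega
    | f+1 =>
      intro lo v h1 h2
      have hp := pick_lt M (lo := lo) (f := f+1) (by omega)
      rcases lt_trichotomy v (lo + pick M lo (f+1)) with hv | hv | hv
      · obtain ⟨a, b, ha1, ha2, hb1, hb2, hiff⟩ := ih (pick M lo (f+1)) (by omega) lo v h1 (by omega)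
        refine ⟨a, b, ha1, ha2, hb1, by omega, ?_⟩
        intro x hx1 hx2
        rw [build_succ]
        simp only [onPath]
        split_ifs with hxk hxlt
        · constructor
          · intro hvk; omega
          · intro hab; omega
        · rw [hiff x hx1 (by omega)]
          constructor
          · rintro (hvk | h)
            · omega
            · exact h
          · exact Or.inr
        · constructor
          · rintro (hvk | h)
            · omega
            · have := pathF_subset M (f - pick M lo (f+1)) (lo + pick M lo (f+1) + 1) x
                ((onPath_iff_mem _ _ _).1 h)
              simp only [Finset.mem_Ico] at this
              omega
          · intro hab; omega
      · refine ⟨lo, lo + (f+1), le_refl _, h1, h2, le_refl _, ?_⟩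
        intro x hx1 hx2
        rw [build_succ]
        simp only [onPath]
        constructor
        · intro _; omega
        · intro _
          split_ifs with hxk hxlt
          · omega
          · exact Or.inl hv
          · exact Or.inl hv
      · obtain ⟨a, b, ha1, ha2, hb1, hb2, hiff⟩ := ih (f - pick M lo (f+1)) (by omega)
          (lo + pick M lo (f+1) + 1) v (by omega) (by omega)
        refine ⟨a, b, by omega, ha2, hb1, by omega, ?_⟩
        intro x hx1 hx2
        rw [build_succ]
        simp only [onPath]
        split_ifs with hxk hxlt
        · constructor
          · intro hvk; omega
          · intro hab; omega
        · constructor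
          · rintro (hvk | h)
            · omega
            · have := pathF_subset M (pick M lo (f+1)) lo x ((onPath_iff_mem _ _ _).1 h)
              simp only [Finset.mem_Ico] at this
              omega
          · intro hab; omega
        · rw [hiff x (by omega) (by omega)]
          constructor
          · rintro (hvk | h)
            · omega
            · exact h
          · exact Or.inr

lemma hFtop : ∀ y, 0 ≤ y → y < 0 + n → F M n y = par (build M 0 n) y none :=
  fun _ _ _ => rfl

lemma F_lt {x y : ℕ} (h : F M n x = some y) : y < n := by
  by_cases hx : x < n
  · by_cases hroot : x = rootk (build M 0 n)
    · exfalso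
      have := (reach_and_Froot M n n 0 none (hFtop M n) x (by omega) (by omega)).2
      rw [← hroot] at this
      rw [F] at h
      rw [F] at this
      rw [this] at h
      simp at h
    · obtain ⟨y', hy', _, hy2⟩ := par_ne_root M n 0 none x (by omega) (by omega) hroot
      have : F M n x = some y' := hy'
      rw [h] at this
      have := Option.some.inj this
      omega
  · exfalso
    have : F M n x = none := par_outside M n 0 x none (by omega)
    rw [this] at h
    simp at h

/-- The constructed search tree on `Fin n`. -/
def TB : RTree (Fin n) where
  supp := Finset.univ
  parent := fun i => (F M n i.val).bind (fun j => if h : j < n then some ⟨j, h⟩ else none)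
  parent_eq_none := fun v hv => absurd (Finset.mem_univ v) hv
  mem_of_parent := fun _ => ⟨Finset.mem_univ _, Finset.mem_univ _⟩
  root_unique := by
    intro v _ w _ hv hw
    have key : ∀ u : Fin n, (F M n u.val).bind
        (fun j => if h : j < n then (some ⟨j, h⟩ : Option (Fin n)) else none) = none →
        u.val = rootk (build M 0 n) := by
      intro u hu
      by_contra hne
      obtain ⟨y, hy, _, hy2⟩ := par_ne_root M n 0 none u.val (by omega)
        (by have := u.isLt; omega) hne
      have hF : F M n u.val = some y := hy
      rw [hF] at hu
      have hu' : (if h : y < n then some (⟨y, h⟩ : Fin n) else none) = none := hu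
      rw [dif_pos (by omega)] at hu'
      simp at hu'
    exact Fin.ext ((key v hv).trans (key w hw).symm)
  reaches_root := by
    intro v _
    have hn : 0 < n := v.pos
    have hrk := rootk_mem M (lo := 0) (f := n) hn
    obtain ⟨hchain, hroot⟩ := reach_and_Froot M n n 0 none (hFtop M n) v.val (by omega)
      (by have := v.isLt; omega)
    refine ⟨⟨rootk (build M 0 n), by omega⟩, Finset.mem_univ _, ?_, ?_⟩
    · show (F M n (rootk (build M 0 n))).bind _ = none
      rw [hroot]
      rfl
    · -- transfer the chain to Fin n
      have transfer : ∀ (x : ℕ) (y : ℕ) (hy : y < n),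
          Relation.ReflTransGen (relF M n) x y → ∀ (hx : x < n),
          Relation.ReflTransGen (fun a b : Fin n =>
            (F M n a.val).bind (fun j => if h : j < n then some ⟨j, h⟩ else none) = some b)
            ⟨x, hx⟩ ⟨y, hy⟩ := by
        intro x y hy hch
        induction hch using Relation.ReflTransGen.head_induction_on with
        | refl => intro hx; exact Relation.ReflTransGen.refl
        | @head p q hpq hrest ih =>
          intro hx
          have hq : q < n := F_lt M n hpq
          refine Relation.ReflTransGen.head (b := ⟨q, hq⟩) ?_ (ih hq)
          show (F M n p).bind _ = _
          rw [hpq]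
          exact dif_pos hq
      exact transfer v.val (rootk (build M 0 n)) (by omega) hchain v.isLt

lemma TB_parent_eq_some {i w : Fin n} :
    (TB M n).parent i = some w ↔ F M n i.val = some w.val := by
  show (F M n i.val).bind _ = some w ↔ _
  constructor
  · intro h
    rcases hF : F M n i.val with _ | j
    · rw [hF] at h; simp at h
    · rw [hF] at h
      have h' : (if hh : j < n then some (⟨j, hh⟩ : Fin n) else none) = some w := h
      rw [dif_pos (F_lt M n hF)] at h'
      have hwj : w.val = j := by rw [← Option.some.inj h']
      rw [hwj]
  · intro h
    rw [h]
    show (if hh : w.val < n then some (⟨w.val, hh⟩ : Fin n) else none) = some w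
    rw [dif_pos w.isLt]

lemma TB_chain_down {x y : Fin n}
    (h : Relation.ReflTransGen (RTreeAux.rel (TB M n)) x y) :
    Relation.ReflTransGen (relF M n) x.val y.val := by
  induction h with
  | refl => exact Relation.ReflTransGen.refl
  | tail _ hstep ih =>
    exact ih.tail ((TB_parent_eq_some M n).1 hstep)

lemma TB_chain_up {x y : Fin n} (h : Relation.ReflTransGen (relF M n) x.val y.val) :
    Relation.ReflTransGen (RTreeAux.rel (TB M n)) x y := by
  have transfer : ∀ (a b : ℕ) (hb : b < n),
      Relation.ReflTransGen (relF M n) a b → ∀ (ha : a < n),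
      Relation.ReflTransGen (RTreeAux.rel (TB M n)) ⟨a, ha⟩ ⟨b, hb⟩ := by
    intro a b hb hch
    induction hch using Relation.ReflTransGen.head_induction_on with
    | refl => intro ha; exact Relation.ReflTransGen.refl
    | @head p q hpq hrest ih =>
      intro ha
      have hq : q < n := F_lt M n hpq
      exact Relation.ReflTransGen.head
        ((TB_parent_eq_some M n (i := ⟨p, ha⟩) (w := ⟨q, hq⟩)).2 hpq) (ih hq)
  have := transfer x.val y.val y.isLt h x.isLt
  simpa using this

lemma TB_anc_iff {a x : Fin n} :
    (TB M n).Anc a x ↔ onPath (build M 0 n) a.val x.val := by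
  constructor
  · intro h
    have hch := TB_chain_down M n ((RTreeAux.anc_iff (TB M n)).1 h)
    rcases anc_to_onPath M n n 0 none (hFtop M n) x.val (by omega)
      (by have := x.isLt; omega) a.val hch with h' | ⟨w, hw, _⟩
    · exact h'
    · simp at hw
  · intro h
    have hch := onPath_to_anc M n n 0 none (hFtop M n) x.val (by omega)
      (by have := x.isLt; omega) a.val h
    exact (RTreeAux.anc_iff (TB M n)).2 (TB_chain_up M n hch)

lemma TB_depth (x : Fin n) : (TB M n).depth x = sdep (build M 0 n) x.val := by
  unfold RTree.depth
  have hsub : ∀ mm ∈ pathF (build M 0 n) x.val, mm < n := by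
    intro mm hm
    have := pathF_subset M n 0 x.val hm
    simp only [Finset.mem_Ico] at this
    omega
  have hset : {a | (TB M n).Anc a x} = ↑((pathF (build M 0 n) x.val).attachFin hsub) := by
    ext a
    simp only [Set.mem_setOf_eq, Finset.coe_sort_coe, Finset.mem_coe, Finset.mem_attachFin]
    rw [TB_anc_iff, onPath_iff_mem]
  rw [hset, Set.ncard_coe_finset, Finset.card_attachFin]
  exact pathF_card M n 0 x.val (by omega) (by have := x.isLt; omega)

/-- Connectivity of an induced interval in the path graph. -/
lemma interval_connected (a b : ℕ) (v : Fin n) (hav : a ≤ v.val) (hvb : v.val < b) :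
    ((restrictG (SimpleGraph.pathGraph n) ↑(Finset.univ : Finset (Fin n))).induce
      {x : Fin n | a ≤ x.val ∧ x.val < b}).Connected := by
  set U : Set (Fin n) := {x : Fin n | a ≤ x.val ∧ x.val < b} with hU
  set G' := (restrictG (SimpleGraph.pathGraph n) ↑(Finset.univ : Finset (Fin n))).induce U
    with hG'
  have hreach : ∀ (d : ℕ) (x y : ↥U), (y : Fin n).val = (x : Fin n).val + d →
      G'.Reachable x y := by
    intro d
    induction d with
    | zero =>
      intro x y hxy
      have : (x : Fin n) = (y : Fin n) := Fin.ext (by omega)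
      rw [Subtype.ext this]
    | succ d ihd =>
      intro x y hxy
      have hx := x.2
      have hy := y.2
      simp only [hU, Set.mem_setOf_eq] at hx hy
      have hy1 : (y : Fin n).val - 1 < n := by have := (y : Fin n).isLt; omega
      set y' : ↥U := ⟨⟨(y : Fin n).val - 1, hy1⟩, by
        simp only [hU, Set.mem_setOf_eq]
        constructor
        · omega
        · omega⟩ with hy'
      have h1 : G'.Reachable x y' := ihd x y' (by simp [hy']; omega)
      have h2 : G'.Adj y' y := by
        show (SimpleGraph.pathGraph n).Adj (y' : Fin n) (y : Fin n) ∧ (y' : Fin n) ∈ (↑(Finset.univ : Finset (Fin n)) : Set (Fin n)) ∧ (y : Fin n) ∈ (↑(Finset.univ : Finset (Fin n)) : Set (Fin n))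
        refine ⟨(SimpleGraph.pathGraph_adj).2 (Or.inl ?_), by simp, by simp⟩
        simp [hy']
        omega
      exact h1.trans h2.reachable
  rw [SimpleGraph.connected_iff]
  refine ⟨?_, ⟨⟨v, hav, hvb⟩⟩⟩
  · intro x y
    rcases le_total (x : Fin n).val (y : Fin n).val with h | h
    · exact hreach ((y : Fin n).val - (x : Fin n).val) x y (by omega)
    · exact (hreach ((x : Fin n).val - (y : Fin n).val) y x (by omega)).symm

/-- The constructed tree is a search tree on the path graph. -/
lemma TB_isSTG : IsSTG (SimpleGraph.pathGraph n) (TB M n) := by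
  refine ⟨rfl, ?_, ?_⟩
  · -- connectivity of descendant sets
    intro v _
    have hn : 0 < n := v.pos
    obtain ⟨a, b, ha1, ha2, hb1, hb2, hiff⟩ := onPath_interval M n 0 v.val (by omega)
      (by have := v.isLt; omega)
    have hset : (TB M n).descSet v = {x : Fin n | a ≤ x.val ∧ x.val < b} := by
      ext x
      rw [RTreeAux.anc_mem_descSet, TB_anc_iff, Set.mem_setOf_eq]
      exact hiff x.val (by omega) (by have := x.isLt; omega)
    rw [hset]
    exact interval_connected n a b v ha2 hb1
  · -- edge comparability
    intro u v _ _ hadj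
    rcases (SimpleGraph.pathGraph_adj).1 hadj with h | h
    · rcases adjacent_onPath M n 0 u.val (by omega) (by rw [h]; have := v.isLt; omega) with h' | h'
      · rw [h] at h'
        exact Or.inl ((TB_anc_iff M n).2 h')
      · rw [h] at h'
        exact Or.inr ((TB_anc_iff M n).2 h')
    · rcases adjacent_onPath M n 0 v.val (by omega) (by rw [h]; have := u.isLt; omega) with h' | h'
      · rw [h] at h'
        exact Or.inr ((TB_anc_iff M n).2 h')
      · rw [h] at h'
        exact Or.inl ((TB_anc_iff M n).2 h')

end UpperAux
namespace EntropyAux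

lemma sum_pos_eq {n : ℕ} (m : Fin n → ℕ) :
    ∑ i ∈ Finset.univ.filter (fun i => 0 < m i), (m i : ℝ) = ((∑ i, m i : ℕ) : ℝ) := by
  push_cast
  apply Finset.sum_subset (Finset.filter_subset _ _)
  intro x _ hx
  simp only [Finset.mem_filter, Finset.mem_univ, true_and, not_lt, Nat.le_zero] at hx
  rw [hx]; simp

lemma shannonH_mul {n : ℕ} (m : Fin n → ℕ) (hm : 0 < ∑ i, m i) :
    shannonH m * ((∑ i, m i : ℕ) : ℝ)
      = ∑ i ∈ Finset.univ.filter (fun i => 0 < m i),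
          (m i : ℝ) * Real.logb 2 (((∑ i, m i : ℕ) : ℝ) / (m i : ℝ)) := by
  have hmReq : (∑ j, (m j : ℝ)) = ((∑ i, m i : ℕ) : ℝ) := by push_cast; rfl
  have hmRpos : (0:ℝ) < ((∑ i, m i : ℕ) : ℝ) := by exact_mod_cast hm
  unfold shannonH
  rw [Finset.sum_mul, Finset.sum_filter]
  apply Finset.sum_congr rfl
  intro i _
  split_ifs with h
  · have hne : (∑ x, (m x : ℝ)) ≠ 0 := by rw [hmReq]; exact ne_of_gt hmRpos
    rw [hmReq]
    field_simp
  · rw [zero_mul]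

end EntropyAux

namespace UpperAux

open EntropyAux

variable {n : ℕ} (m : Fin n → ℕ)

/-- The weight function on `ℕ`. -/
def MW : ℕ → ℕ := fun j => if h : j < n then m ⟨j, h⟩ else 0

lemma W_total : W (MW m) 0 (0 + n) = ∑ i, m i := by
  rw [Nat.zero_add]
  unfold W
  rw [← Finset.range_eq_Ico, ← Fin.sum_univ_eq_sum_range (fun j => MW m j) n]
  apply Finset.sum_congr rfl
  intro i _
  unfold MW
  rw [dif_pos i.isLt]

/-- Depth bound for the constructed tree. -/
lemma TB_depth_bound (i : Fin n) :
    m i * 2 ^ ((TB (MW m) n).depth i) ≤ 2 * ∑ j, m j := by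
  rw [TB_depth]
  have := sdep_bound (MW m) n 0 i.val (by omega) (by have := i.isLt; omega)
  rw [W_total] at this
  have hMW : MW m i.val = m i := by unfold MW; rw [dif_pos i.isLt]
  rw [hMW] at this
  exact this

/-- The upper bound. -/
lemma upper_bound :
    ∑ i, (m i : ℝ) * (((TB (MW m) n).depth i : ℕ) : ℝ)
      ≤ 2 * (shannonH m + 1) * ((∑ i, m i : ℕ) : ℝ) := by
  classical
  rcases Nat.eq_zero_or_pos (∑ i, m i) with hm | hm
  · have hz : ∀ i, m i = 0 := fun i => Finset.sum_eq_zero_iff.1 hm i (Finset.mem_univ i)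
    have h1 : ∑ i, (m i : ℝ) * (((TB (MW m) n).depth i : ℕ) : ℝ) = 0 :=
      Finset.sum_eq_zero fun i _ => by rw [hz i]; simp
    rw [h1, hm]
    simp
  · set mR : ℝ := ((∑ i, m i : ℕ) : ℝ) with hmRdef
    have hmRpos : (0:ℝ) < mR := by rw [hmRdef]; exact_mod_cast hm
    set pos : Finset (Fin n) := Finset.univ.filter (fun i => 0 < m i) with hpos
    have hdrop : ∑ i, (m i : ℝ) * (((TB (MW m) n).depth i : ℕ) : ℝ)
        = ∑ i ∈ pos, (m i : ℝ) * (((TB (MW m) n).depth i : ℕ) : ℝ) := by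
      symm
      apply Finset.sum_subset (Finset.filter_subset _ _)
      intro x _ hx
      simp only [hpos, Finset.mem_filter, Finset.mem_univ, true_and, not_lt, Nat.le_zero] at hx
      rw [hx]
      simp
    have hterm : ∀ i ∈ pos, (m i : ℝ) * (((TB (MW m) n).depth i : ℕ) : ℝ)
        ≤ (m i : ℝ) * (1 + Real.logb 2 (mR / (m i : ℝ))) := by
      intro i hi
      simp only [hpos, Finset.mem_filter, Finset.mem_univ, true_and] at hi
      have hmi : (0:ℝ) < (m i : ℝ) := by exact_mod_cast hi
      apply mul_le_mul_of_nonneg_left _ hmi.le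
      -- depth bound
      set d : ℕ := (TB (MW m) n).depth i with hd
      have hd1 : 1 ≤ d := RTreeAux.one_le_depth (TB (MW m) n) i
      obtain ⟨k, hk⟩ : ∃ k, d = k + 1 := ⟨d - 1, by omega⟩
      have hb := TB_depth_bound m i
      rw [← hd, hk] at hb
      -- m i * 2^(k+1) ≤ 2 * Σ, so m i * 2^k ≤ Σ
      have hb2 : (m i : ℕ) * 2 ^ k ≤ ∑ j, m j := by
        rw [pow_succ, ← mul_assoc] at hb
        omega
      have hbR : (m i : ℝ) * 2 ^ k ≤ mR := by
        rw [hmRdef]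
        exact_mod_cast hb2
      have hk2 : (2:ℝ) ^ k ≤ mR / (m i : ℝ) := by
        rw [le_div_iff₀ hmi]
        linarith [hbR]
      have hlogk : (k : ℝ) ≤ Real.logb 2 (mR / (m i : ℝ)) := by
        calc (k : ℝ) = Real.logb 2 ((2:ℝ) ^ k) := by
              rw [Real.logb_pow, Real.logb_self_eq_one one_lt_two]
              ring
        _ ≤ Real.logb 2 (mR / (m i : ℝ)) :=
              Real.logb_le_logb_of_le one_lt_two (by positivity) hk2
      rw [hk]
      push_cast
      linarith
    have hHmul := shannonH_mul m hm
    rw [← hpos, ← hmRdef] at hHmul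
    have hsumpos := sum_pos_eq m
    rw [← hpos, ← hmRdef] at hsumpos
    have hH0 := shannonH_nonneg m
    calc ∑ i, (m i : ℝ) * (((TB (MW m) n).depth i : ℕ) : ℝ)
        = ∑ i ∈ pos, (m i : ℝ) * (((TB (MW m) n).depth i : ℕ) : ℝ) := hdrop
    _ ≤ ∑ i ∈ pos, (m i : ℝ) * (1 + Real.logb 2 (mR / (m i : ℝ))) := Finset.sum_le_sum hterm
    _ = (∑ i ∈ pos, (m i : ℝ)) + ∑ i ∈ pos, (m i : ℝ) * Real.logb 2 (mR / (m i : ℝ)) := by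
          rw [← Finset.sum_add_distrib]
          apply Finset.sum_congr rfl
          intro i _
          ring
    _ = mR + shannonH m * mR := by rw [hsumpos, hHmul]
    _ ≤ 2 * (shannonH m + 1) * mR := by nlinarith

end UpperAux
/-- Mehlhorn's bound: `(1/2)·H(X)·m ≤ OPT-ST(X) ≤ 2·(H(X)+1)·m`. -/
theorem opt_static_bst_entropy (n : ℕ) (m : Fin n → ℕ) :
    (∀ S : RTree (Fin n), IsSTG (SimpleGraph.pathGraph n) S →
      (1/2 : ℝ) * shannonH m * ((∑ i, m i : ℕ) : ℝ) ≤
        ∑ i, (m i : ℝ) * (S.depth i : ℝ)) ∧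
    (∃ S : RTree (Fin n), IsSTG (SimpleGraph.pathGraph n) S ∧
      ∑ i, (m i : ℝ) * (S.depth i : ℝ) ≤
        2 * (shannonH m + 1) * ((∑ i, m i : ℕ) : ℝ)) := by
  constructor
  · intro S hS
    exact LowerAux.lower_bound S hS m
  · refine ⟨UpperAux.TB (UpperAux.MW m) n, UpperAux.TB_isSTG _ n, ?_⟩
    exact UpperAux.upper_bound m
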